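/- Let I be a finite set, m ∈ ℕ, and reals ε, ϵ, δ with 0 < ε < 1/2, 0 < ϵ ≤ ε, and 0 < δ ≤ ε^m/2. Suppose C ⊆ 2^I satisfies: for every f ∈ F^I with |dom f| ≤ m, | |(C)^f|·2^{−|I|} − (1 − ε)^{m⁰_f}·ε^{m¹_f} | < δ. Let k⁰, k₀ ∈ ℕ with k⁰ + k₀ ≤ m, let f ∈ F^I with |dom f| ≤ k⁰, and let m' be a distribution on 2^I with ŵ(m'_{(C)^f}) ≥ ϵ. Then there exists f̃ ∈ F^I extending f with |dom f̃ \ dom f| ≤ k₀ − s̄(k₀) such that for every g ∈ F^I extending f̃ with |dom g \ dom f̃| ≤ s̄(k₀), one has ŵ(m'_{(C)^g}) ≥ ŵ(m'_{(C)^f})·(1 − ϵ). -/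

import Mathlib

open Set Pointwise

/-- `(C)^f` for a partial two-valued function `f ∈ F^I`, represented by its domain `D`
together with a value function `v` (where `v s = true` codes `f s = 1`):
the intersection over `s ∈ D` of `C + s` when `f s = 0` and of `(C + s)ᶜ` when
`f s = 1`.  For `D = ∅` this is all of `2^I`. -/
def csec {ι : Type} (C D : Set (ι → ZMod 2)) (v : (ι → ZMod 2) → Bool) :
    Set (ι → ZMod 2) :=
  ⋂ s ∈ D, if v s = true then (C + {s})ᶜ else C + {s}

/-- `m⁰_f`, the number of points of the domain where `f` takes the value `0`. -/
noncomputable def m0 {ι : Type} (D : Set (ι → ZMod 2)) (v : (ι → ZMod 2) → Bool) : ℕ :=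
  (D ∩ {s | v s = false}).ncard

/-- `m¹_f`, the number of points of the domain where `f` takes the value `1`. -/
noncomputable def m1 {ι : Type} (D : Set (ι → ZMod 2)) (v : (ι → ZMod 2) → Bool) : ℕ :=
  (D ∩ {s | v s = true}).ncard

/-- `ŵ(m'_Y) = Σ_{x ∈ Y} (2^{|I|}/|Y|)·m'(x)`, the normalized mass that the
distribution `m'` gives to `Y`. -/
noncomputable def wHat {ι : Type} [Fintype ι] (m' : (ι → ZMod 2) → ℝ)
    (Y : Set (ι → ZMod 2)) : ℝ :=
  ((2 : ℝ) ^ Fintype.card ι / (Y.ncard : ℝ)) * ∑ᶠ x ∈ Y, m' x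

/-- The function `s̄` of the paper: `s̄(k)` is the largest `l` with
`(k/(l+1))·ϵ²·ε^l > 4` when `k·ϵ² > 4`, and `0` otherwise. -/
noncomputable def sbar (ε ϵ : ℝ) (k : ℕ) : ℕ :=
  if 4 < (k : ℝ) * ϵ ^ 2 then
    sSup {l : ℕ | 4 < (k : ℝ) / ((l : ℝ) + 1) * ϵ ^ 2 * ε ^ l}
  else 0

lemma mem_csec {ι : Type} {C D : Set (ι → ZMod 2)} {v : (ι → ZMod 2) → Bool}
    {x : ι → ZMod 2} :
    x ∈ csec C D v ↔ ∀ s ∈ D, (x ∈ C + {s} ↔ v s = false) := by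
  simp only [csec, Set.mem_iInter]
  refine forall_congr' fun s => forall_congr' fun _ => ?_
  cases h : v s <;> simp [h]

lemma csec_congr {ι : Type} {C D : Set (ι → ZMod 2)} {v v' : (ι → ZMod 2) → Bool}
    (h : ∀ s ∈ D, v s = v' s) : csec C D v = csec C D v' := by
  ext x
  simp only [mem_csec]
  exact forall₂_congr fun s hs => by rw [h s hs]

lemma m0_add_m1 {ι : Type} [Fintype ι] (D : Set (ι → ZMod 2)) (v : (ι → ZMod 2) → Bool) :
    m0 D v + m1 D v = D.ncard := by
  rw [m0, m1, ← Set.ncard_union_eq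
    (Set.disjoint_left.2 (by rintro x ⟨-, h0⟩ ⟨-, h1⟩; simp_all))
    (Set.toFinite _) (Set.toFinite _)]
  congr 1
  ext x
  by_cases h : v x <;> simp [h]

lemma m0_union {ι : Type} [Fintype ι] {D E : Set (ι → ZMod 2)} (v : (ι → ZMod 2) → Bool)
    (h : Disjoint D E) : m0 (D ∪ E) v = m0 D v + m0 E v := by
  rw [m0, Set.union_inter_distrib_right, Set.ncard_union_eq
    (h.mono Set.inter_subset_left Set.inter_subset_left) (Set.toFinite _) (Set.toFinite _)]
  rfl

lemma m1_union {ι : Type} [Fintype ι] {D E : Set (ι → ZMod 2)} (v : (ι → ZMod 2) → Bool)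
    (h : Disjoint D E) : m1 (D ∪ E) v = m1 D v + m1 E v := by
  rw [m1, Set.union_inter_distrib_right, Set.ncard_union_eq
    (h.mono Set.inter_subset_left Set.inter_subset_left) (Set.toFinite _) (Set.toFinite _)]
  rfl

lemma m0_congr {ι : Type} {D : Set (ι → ZMod 2)} {v v' : (ι → ZMod 2) → Bool}
    (h : ∀ s ∈ D, v s = v' s) : m0 D v = m0 D v' := by
  unfold m0
  congr 1
  ext x
  exact and_congr_right fun hx => by simp [Set.mem_setOf_eq, h x hx]

lemma m1_congr {ι : Type} {D : Set (ι → ZMod 2)} {v v' : (ι → ZMod 2) → Bool}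
    (h : ∀ s ∈ D, v s = v' s) : m1 D v = m1 D v' := by
  unfold m1
  congr 1
  ext x
  exact and_congr_right fun hx => by simp [Set.mem_setOf_eq, h x hx]

noncomputable instance (priority := 100) {ι : Type} [Fintype ι] : Fintype (ι → ZMod 2) :=
  Fintype.ofFinite _

lemma finsum_mem_fin {α : Type*} [Fintype α] (u : α → ℝ) (Y : Set α) :
    ∑ᶠ x ∈ Y, u x = ∑ x : α, Y.indicator u x := by
  rw [finsum_mem_def, finsum_eq_sum_of_fintype]

lemma ncard_fin {α : Type*} [Fintype α] (Y : Set α) :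
    (Y.ncard : ℝ) = ∑ x : α, Y.indicator (fun _ => (1:ℝ)) x := by
  classical
  have : ∀ x : α, Y.indicator (fun _ => (1:ℝ)) x = if x ∈ Y then (1:ℝ) else 0 :=
    fun x => Set.indicator_apply Y _ x
  simp_rw [this]
  rw [Finset.sum_boole, Set.ncard_eq_toFinset_card']
  norm_cast
  congr 1
  ext x
  simp

lemma finsum_one_fin {α : Type*} [Fintype α] (Y : Set α) :
    ∑ᶠ x ∈ Y, (1 : ℝ) = (Y.ncard : ℝ) := by
  rw [finsum_mem_fin, ncard_fin]

lemma finsum_mem_nonneg_fin {α : Type*} [Fintype α] (u : α → ℝ) (hu : ∀ x, 0 ≤ u x)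
    (Y : Set α) : 0 ≤ ∑ᶠ x ∈ Y, u x := by
  rw [finsum_mem_fin]
  exact Finset.sum_nonneg fun x _ => Set.indicator_nonneg (fun y _ => hu y) x

lemma wHat_nonneg {ι : Type} [Fintype ι] (m' : (ι → ZMod 2) → ℝ)
    (hm' : ∀ x, 0 ≤ m' x) (Y : Set (ι → ZMod 2)) : 0 ≤ wHat m' Y := by
  refine mul_nonneg (div_nonneg (by positivity) (Nat.cast_nonneg _)) ?_
  exact finsum_mem_nonneg_fin m' hm' Y

lemma wHat_le_one {ι : Type} [Fintype ι] (m' : (ι → ZMod 2) → ℝ)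
    (hm' : ∀ x, 0 ≤ m' x ∧ m' x ≤ 1 / 2 ^ Fintype.card ι) (Y : Set (ι → ZMod 2)) :
    wHat m' Y ≤ 1 := by
  classical
  rcases eq_or_ne (Y.ncard : ℝ) 0 with h | h
  · rw [wHat, h, div_zero, zero_mul]; exact zero_le_one
  · have hN : (0:ℝ) < (Y.ncard : ℝ) := lt_of_le_of_ne (Nat.cast_nonneg _) (Ne.symm h)
    have hR : (0:ℝ) < (2:ℝ) ^ Fintype.card ι := by positivity
    have hμ : ∑ᶠ x ∈ Y, m' x ≤ (Y.ncard : ℝ) / 2 ^ Fintype.card ι := by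
      rw [finsum_mem_fin, ncard_fin, Finset.sum_div]
      refine Finset.sum_le_sum fun x _ => ?_
      rw [Set.indicator_apply, Set.indicator_apply]
      by_cases hx : x ∈ Y
      · simpa [hx] using (hm' x).2.trans (le_of_eq (one_div _))
      · simp [hx]
    rw [wHat]
    calc (2:ℝ) ^ Fintype.card ι / (Y.ncard : ℝ) * ∑ᶠ x ∈ Y, m' x
        ≤ (2:ℝ) ^ Fintype.card ι / (Y.ncard : ℝ) * ((Y.ncard : ℝ) / 2 ^ Fintype.card ι) :=
          mul_le_mul_of_nonneg_left hμ (by positivity)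
      _ = 1 := by field_simp

lemma mass_eq {ι : Type} [Fintype ι] (m' : (ι → ZMod 2) → ℝ) (Y : Set (ι → ZMod 2)) :
    ∑ᶠ x ∈ Y, m' x = wHat m' Y * (Y.ncard : ℝ) / 2 ^ Fintype.card ι := by
  rcases eq_or_ne (Y.ncard : ℝ) 0 with h | h
  · have hY : Y = ∅ := by
      have h2 := Set.ncard_eq_zero (Set.toFinite Y)
      rw [← h2]
      exact_mod_cast h
    subst hY
    simp [finsum_mem_empty]
  · have hR : ((2:ℝ) ^ Fintype.card ι) ≠ 0 := by positivity
    rw [wHat]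
    field_simp

lemma csec_partition {ι : Type} [Fintype ι] (C D E : Set (ι → ZMod 2))
    (v : (ι → ZMod 2) → Bool) (hDE : Disjoint D E)
    (A : Finset ((ι → ZMod 2) → Bool))
    (hA : ∀ q, q ∈ A ↔ ∀ s, s ∉ E → q s = v s)
    (u : (ι → ZMod 2) → ℝ) :
    ∑ q ∈ A, ∑ᶠ x ∈ csec C (D ∪ E) q, u x = ∑ᶠ x ∈ csec C D v, u x := by
  classical
  simp_rw [finsum_mem_fin]
  rw [Finset.sum_comm]
  refine Finset.sum_congr rfl fun x _ => ?_
  set qx : (ι → ZMod 2) → Bool :=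
    fun s => if s ∈ E then (if x ∈ C + {s} then false else true) else v s with hqxdef
  have hqxA : qx ∈ A := (hA qx).2 fun s hs => if_neg hs
  have key : ∀ q ∈ A, (x ∈ csec C (D ∪ E) q ↔ x ∈ csec C D v ∧ q = qx) := by
    intro q hq
    rw [hA] at hq
    constructor
    · intro hx
      have hx' := mem_csec.1 hx
      constructor
      · refine mem_csec.2 fun s hs => ?_
        have hsE : s ∉ E := fun hsE => (hDE.le_bot ⟨hs, hsE⟩).elim
        rw [← hq s hsE]
        exact hx' s (Or.inl hs)
      · funext s
        by_cases hsE : s ∈ E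
        · have h2 := hx' s (Or.inr hsE)
          rw [hqxdef]
          simp only [hsE, if_true]
          by_cases hm : x ∈ C + {s}
          · rw [if_pos hm]
            exact h2.1 hm
          · rw [if_neg hm]
            rcases Bool.eq_false_or_eq_true (q s) with h3 | h3
            · exact h3
            · exact absurd (h2.2 h3) hm
        · rw [hqxdef]
          simp only [hsE, if_false]
          exact hq s hsE
    · rintro ⟨hxD, rfl⟩
      refine mem_csec.2 fun s hs => ?_
      rcases hs with hsD | hsE
      · have hsE : s ∉ E := fun hsE => (hDE.le_bot ⟨hsD, hsE⟩).elim
        rw [hqxdef]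
        simp only [hsE, if_false]
        exact mem_csec.1 hxD s hsD
      · rw [hqxdef]
        simp only [hsE, if_true]
        by_cases hm : x ∈ C + {s} <;> simp [hm]
  calc ∑ q ∈ A, (csec C (D ∪ E) q).indicator u x
      = ∑ q ∈ A, if q = qx then (csec C D v).indicator u x else 0 := by
        refine Finset.sum_congr rfl fun q hq => ?_
        by_cases h1 : x ∈ csec C (D ∪ E) q
        · obtain ⟨h2, rfl⟩ := (key q hq).1 h1
          rw [Set.indicator_of_mem h1, if_pos rfl, Set.indicator_of_mem h2]
        · rw [Set.indicator_of_notMem h1]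
          rw [key q hq] at h1
          push_neg at h1
          by_cases h2 : q = qx
          · subst h2
            rw [if_pos rfl, Set.indicator_of_notMem (fun hc => (h1 hc) rfl)]
          · rw [if_neg h2]
    _ = (csec C D v).indicator u x := by
        rw [Finset.sum_ite_eq' A qx (fun _ => (csec C D v).indicator u x), if_pos hqxA]

noncomputable def prw (ε : ℝ) {ι : Type} (D : Set (ι → ZMod 2))
    (v : (ι → ZMod 2) → Bool) : ℝ :=
  (1 - ε) ^ m0 D v * ε ^ m1 D v

lemma prw_pos {ε : ℝ} (h0 : 0 < ε) (h2 : ε < 1/2) {ι : Type} (D : Set (ι → ZMod 2))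
    (v : (ι → ZMod 2) → Bool) : 0 < prw ε D v := by
  have : (0:ℝ) < 1 - ε := by linarith
  exact mul_pos (pow_pos this _) (pow_pos h0 _)

lemma prw_le_one {ε : ℝ} (h0 : 0 < ε) (h2 : ε < 1/2) {ι : Type} (D : Set (ι → ZMod 2))
    (v : (ι → ZMod 2) → Bool) : prw ε D v ≤ 1 := by
  have h1 : (0:ℝ) ≤ 1 - ε := by linarith
  calc prw ε D v ≤ 1 ^ m0 D v * 1 ^ m1 D v := by
        refine mul_le_mul (pow_le_pow_left₀ h1 (by linarith) _)
          (pow_le_pow_left₀ (le_of_lt h0) (by linarith) _) (by positivity) (by positivity)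
    _ = 1 := by simp

lemma eps_pow_le_prw {ε : ℝ} (h0 : 0 < ε) (h2 : ε < 1/2) {ι : Type} [Fintype ι]
    (D : Set (ι → ZMod 2)) (v : (ι → ZMod 2) → Bool) :
    ε ^ D.ncard ≤ prw ε D v := by
  rw [← m0_add_m1 D v, pow_add, prw]
  refine mul_le_mul_of_nonneg_right ?_ (by positivity)
  exact pow_le_pow_left₀ (le_of_lt h0) (by linarith) _

lemma prw_union {ε : ℝ} {ι : Type} [Fintype ι] {D E : Set (ι → ZMod 2)}
    (v : (ι → ZMod 2) → Bool) (h : Disjoint D E) :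
    prw ε (D ∪ E) v = prw ε D v * prw ε E v := by
  rw [prw, prw, prw, m0_union v h, m1_union v h, pow_add, pow_add]
  ring

lemma prw_congr {ε : ℝ} {ι : Type} {D : Set (ι → ZMod 2)} {v v' : (ι → ZMod 2) → Bool}
    (h : ∀ s ∈ D, v s = v' s) : prw ε D v = prw ε D v' := by
  rw [prw, prw, m0_congr h, m1_congr h]

lemma csec_bounds {ι : Type} [Fintype ι] {m : ℕ} {ε δ : ℝ} (hε0 : 0 < ε) (hε2 : ε < 1/2)
    (hδ : δ ≤ ε ^ m / 2) {C : Set (ι → ZMod 2)}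
    (hC : ∀ (D : Set (ι → ZMod 2)) (v : (ι → ZMod 2) → Bool), D.ncard ≤ m →
      |((csec C D v).ncard : ℝ) / 2 ^ Fintype.card ι
        - (1 - ε) ^ m0 D v * ε ^ m1 D v| < δ)
    (D : Set (ι → ZMod 2)) (v : (ι → ZMod 2) → Bool) (hD : D.ncard ≤ m) :
    prw ε D v / 2 < ((csec C D v).ncard : ℝ) / 2 ^ Fintype.card ι ∧
    ((csec C D v).ncard : ℝ) / 2 ^ Fintype.card ι < prw ε D v + δ ∧
    δ ≤ prw ε D v / 2 := by
  have habs := abs_sub_lt_iff.1 (hC D v hD)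
  have hd2 : δ ≤ prw ε D v / 2 := by
    calc δ ≤ ε ^ m / 2 := hδ
      _ ≤ ε ^ D.ncard / 2 := by
          have := pow_le_pow_of_le_one (le_of_lt hε0) (by linarith) hD
          linarith
      _ ≤ prw ε D v / 2 := by
          have := eps_pow_le_prw hε0 hε2 D v
          linarith
  refine ⟨?_, ?_, hd2⟩
  · have := habs.2
    rw [prw] at hd2 ⊢
    linarith
  · have := habs.1
    rw [prw]
    linarith

set_option maxHeartbeats 1000000 in
lemma main_step {ι : Type} [Fintype ι] (m : ℕ) (ε ϵ δ : ℝ)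
    (hε0 : 0 < ε) (hε2 : ε < 1 / 2) (hϵ0 : 0 < ϵ) (hϵε : ϵ ≤ ε)
    (hδ0 : 0 < δ) (hδ : δ ≤ ε ^ m / 2)
    (C : Set (ι → ZMod 2))
    (hC : ∀ (D : Set (ι → ZMod 2)) (v : (ι → ZMod 2) → Bool), D.ncard ≤ m →
      |((csec C D v).ncard : ℝ) / 2 ^ Fintype.card ι
        - (1 - ε) ^ m0 D v * ε ^ m1 D v| < δ)
    (m' : (ι → ZMod 2) → ℝ)
    (hm' : ∀ x, 0 ≤ m' x ∧ m' x ≤ 1 / 2 ^ Fintype.card ι)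
    (s : ℕ) (D Dg : Set (ι → ZMod 2)) (v vg : (ι → ZMod 2) → Bool)
    (hD : D.ncard ≤ m) (hDg : Dg.ncard ≤ m) (hsub : D ⊆ Dg)
    (hagree : ∀ t ∈ D, vg t = v t) (hl : (Dg \ D).ncard ≤ s)
    (hw : 0 < wHat m' (csec C D v))
    (hbad : wHat m' (csec C Dg vg) < (1 - ϵ) * wHat m' (csec C D v)) :
    ∃ v' : (ι → ZMod 2) → Bool, (∀ t, t ∉ Dg \ D → v' t = v t) ∧
      (1 + ϵ * ε ^ s / 4) * wHat m' (csec C D v) < wHat m' (csec C Dg v') := by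
  classical
  by_contra hcon
  push_neg at hcon
  set E : Set (ι → ZMod 2) := Dg \ D with hE
  have hDE : Disjoint D E := Set.disjoint_sdiff_right
  have hDun : D ∪ E = Dg := Set.union_diff_cancel hsub
  set R : ℝ := (2:ℝ) ^ Fintype.card ι with hRdef
  have hR : 0 < R := by positivity
  set w : ℝ := wHat m' (csec C D v) with hwdef
  set η : ℝ := ϵ * ε ^ s / 4 with hη
  have hη0 : 0 < η := by positivity
  -- the finset of admissible value functions
  haveI : Fintype ((ι → ZMod 2) → Bool) := Fintype.ofFinite _
  set A : Finset ((ι → ZMod 2) → Bool) :=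
    Finset.univ.filter (fun q => ∀ t, t ∉ E → q t = v t) with hAdef
  have hA : ∀ q, q ∈ A ↔ ∀ t, t ∉ E → q t = v t := by
    intro q; simp [hAdef]
  -- the piece corresponding to vg
  set qg : (ι → ZMod 2) → Bool := fun t => if t ∈ E then vg t else v t with hqgdef
  have hqgA : qg ∈ A := (hA qg).2 fun t ht => if_neg ht
  have hqgeq : csec C (D ∪ E) qg = csec C Dg vg := by
    rw [hDun]
    refine csec_congr fun t ht => ?_
    by_cases htE : t ∈ E
    · simp [hqgdef, htE]
    · have htD : t ∈ D := by
        rcases (hDun ▸ ht : t ∈ D ∪ E) with h | h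
        · exact h
        · exact absurd h htE
      simp [hqgdef, htE, hagree t htD]
  -- partition identities
  have hpm := csec_partition C D E v hDE A hA m'
  simp_rw [mass_eq m'] at hpm
  have hpc := csec_partition C D E v hDE A hA (fun _ => (1:ℝ))
  simp_rw [finsum_one_fin] at hpc
  -- size bounds
  obtain ⟨hbD1, hbD2, hbD3⟩ := csec_bounds hε0 hε2 hδ hC D v hD
  obtain ⟨hbG1, hbG2, hbG3⟩ := csec_bounds hε0 hε2 hδ hC Dg vg hDg
  set ND : ℝ := ((csec C D v).ncard : ℝ) with hNDdef
  set NG : ℝ := ((csec C Dg vg).ncard : ℝ) with hNGdef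
  have hND0 : 0 < ND := by
    have h0 := prw_pos hε0 hε2 D v
    have h2 : 0 < ND / R := lt_trans (by linarith) hbD1
    have h3 : ND / R * R = ND := div_mul_cancel₀ _ (ne_of_gt hR)
    nlinarith
  have hNG0 : 0 < NG := by
    have h0 := prw_pos hε0 hε2 Dg vg
    have h2 : 0 < NG / R := lt_trans (by linarith) hbG1
    have h3 : NG / R * R = NG := div_mul_cancel₀ _ (ne_of_gt hR)
    nlinarith
  -- prw relations
  have hprwG : prw ε Dg vg = prw ε D v * prw ε E vg := by
    rw [← hDun, prw_union vg hDE, prw_congr hagree]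
  have hprwE1 : ε ^ s ≤ prw ε E vg := by
    refine le_trans ?_ (eps_pow_le_prw hε0 hε2 E vg)
    exact pow_le_pow_of_le_one (le_of_lt hε0) (by linarith) hl
  have hprwE2 : prw ε E vg ≤ 1 := prw_le_one hε0 hε2 E vg
  have hprwD0 : 0 < prw ε D v := prw_pos hε0 hε2 D v
  -- ratio: ε ^ s * ND < 3 * NG
  have hratio : ε ^ s * (ND / R) < 3 * (NG / R) := by
    have h1 : ND / R < (3/2) * prw ε D v := by linarith
    have h2 : (3/2) * prw ε Dg vg < 3 * (NG / R) := by linarith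
    have h3 : ε ^ s * (ND / R) < ε ^ s * ((3/2) * prw ε D v) := by
      refine mul_lt_mul_of_pos_left h1 (by positivity)
    calc ε ^ s * (ND / R) < ε ^ s * ((3/2) * prw ε D v) := h3
      _ ≤ prw ε E vg * ((3/2) * prw ε D v) := by
          refine mul_le_mul_of_nonneg_right hprwE1 (by positivity)
      _ = (3/2) * prw ε Dg vg := by rw [hprwG]; ring
      _ < 3 * (NG / R) := h2
  -- all pieces are bounded by (1+η) * w
  have hpieces : ∀ q ∈ A, wHat m' (csec C (D ∪ E) q) ≤ (1 + η) * w := by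
    intro q hq
    have := hcon q ((hA q).1 hq)
    rw [hDun]
    exact this
  -- pull out the qg term
  rw [← Finset.add_sum_erase A _ hqgA] at hpm hpc
  rw [hqgeq] at hpm hpc
  -- bound the remaining sum
  have herase_nonneg : (0:ℝ) ≤ ∑ q ∈ A.erase qg, (((csec C (D ∪ E) q).ncard : ℝ)) := by
    exact Finset.sum_nonneg fun q _ => Nat.cast_nonneg _
  have hsumbound : ∑ q ∈ A.erase qg,
      wHat m' (csec C (D ∪ E) q) * ((csec C (D ∪ E) q).ncard : ℝ) / R
      ≤ (1 + η) * w * ((ND - NG) / R) := by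
    have hrem : ∑ q ∈ A.erase qg, (((csec C (D ∪ E) q).ncard : ℝ)) = ND - NG := by
      linarith [hpc]
    calc ∑ q ∈ A.erase qg,
        wHat m' (csec C (D ∪ E) q) * ((csec C (D ∪ E) q).ncard : ℝ) / R
        ≤ ∑ q ∈ A.erase qg, (1 + η) * w * (((csec C (D ∪ E) q).ncard : ℝ) / R) := by
          refine Finset.sum_le_sum fun q hq => ?_
          rw [mul_div_assoc]
          refine mul_le_mul_of_nonneg_right (hpieces q (Finset.mem_of_mem_erase hq)) ?_
          positivity
      _ = (1 + η) * w * ((ND - NG) / R) := by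
          rw [← Finset.mul_sum, ← Finset.sum_div, hrem]
  -- the main inequality
  have hmain : w * ND / R < (1 - ϵ) * w * (NG / R) + (1 + η) * w * ((ND - NG) / R) := by
    have h1 : wHat m' (csec C Dg vg) * NG / R < (1 - ϵ) * w * (NG / R) := by
      rw [mul_div_assoc]
      refine mul_lt_mul_of_pos_right hbad (by positivity)
    linarith [hpm, hsumbound]
  have h2 : ND < (1 - ϵ) * NG + (1 + η) * (ND - NG) := by
    have e1 : (1 - ϵ) * w * (NG / R) + (1 + η) * w * ((ND - NG) / R)
        = w * ((1 - ϵ) * NG + (1 + η) * (ND - NG)) / R := by ring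
    rw [e1] at hmain
    have e2 : w * ND / R < w * ((1 - ϵ) * NG + (1 + η) * (ND - NG)) / R := hmain
    have e3 : w * ND < w * ((1 - ϵ) * NG + (1 + η) * (ND - NG)) := by
      have := mul_lt_mul_of_pos_right e2 hR
      rw [div_mul_cancel₀ _ (ne_of_gt hR), div_mul_cancel₀ _ (ne_of_gt hR)] at this
      exact this
    exact (mul_lt_mul_iff_right₀ hw).1 e3
  have hfin : ϵ * NG < η * ND := by nlinarith [hη0, hNG0]
  have hfin2 : 4 * NG < ε ^ s * ND := by
    have e4 : η * ND = ϵ * (ε ^ s * ND / 4) := by rw [hη]; ring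
    rw [e4] at hfin
    have := (mul_lt_mul_iff_right₀ hϵ0).1 hfin
    linarith
  have hratio' : ε ^ s * ND < 3 * NG := by
    have h := mul_lt_mul_of_pos_right hratio hR
    have e1 : ε ^ s * (ND / R) * R = ε ^ s * ND := by field_simp
    have e2 : 3 * (NG / R) * R = 3 * NG := by field_simp
    rw [e1, e2] at h
    exact h
  linarith

set_option maxHeartbeats 1000000 in
/-- Lemma 5.9 ("small") of the paper. -/
theorem exists_extension_wHat_ge
    (ι : Type) [Fintype ι] (m : ℕ) (ε ϵ δ : ℝ)
    (hε0 : 0 < ε) (hε2 : ε < 1 / 2) (hϵ0 : 0 < ϵ) (hϵε : ϵ ≤ ε)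
    (hδ0 : 0 < δ) (hδ : δ ≤ ε ^ m / 2)
    (C : Set (ι → ZMod 2))
    (hC : ∀ (D : Set (ι → ZMod 2)) (v : (ι → ZMod 2) → Bool), D.ncard ≤ m →
      |((csec C D v).ncard : ℝ) / 2 ^ Fintype.card ι
        - (1 - ε) ^ m0 D v * ε ^ m1 D v| < δ)
    (kup k0 : ℕ) (hk : kup + k0 ≤ m)
    (Df : Set (ι → ZMod 2)) (vf : (ι → ZMod 2) → Bool) (hDf : Df.ncard ≤ kup)
    (m' : (ι → ZMod 2) → ℝ)
    (hm' : ∀ x, 0 ≤ m' x ∧ m' x ≤ 1 / 2 ^ Fintype.card ι)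
    (hbig : ϵ ≤ wHat m' (csec C Df vf)) :
    ∃ (Dt : Set (ι → ZMod 2)) (vt : (ι → ZMod 2) → Bool),
      Df ⊆ Dt ∧ (∀ s ∈ Df, vt s = vf s) ∧
      (Dt \ Df).ncard ≤ k0 - sbar ε ϵ k0 ∧
      ∀ (Dg : Set (ι → ZMod 2)) (vg : (ι → ZMod 2) → Bool),
        Dt ⊆ Dg → (∀ s ∈ Dt, vg s = vt s) → (Dg \ Dt).ncard ≤ sbar ε ϵ k0 →
        wHat m' (csec C Df vf) * (1 - ϵ) ≤ wHat m' (csec C Dg vg) := by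
  classical
  rcases Nat.eq_zero_or_pos (sbar ε ϵ k0) with hs0 | hspos
  · -- trivial case : sbar = 0
    refine ⟨Df, vf, subset_rfl, fun _ _ => rfl, by simp, ?_⟩
    intro Dg vg hg1 hg2 hg3
    rw [hs0, Nat.le_zero] at hg3
    have hDg : Dg = Df := by
      have h5 : Dg \ Df = ∅ := (Set.ncard_eq_zero (Set.toFinite _)).1 hg3
      exact Set.Subset.antisymm (Set.diff_eq_empty.1 h5) hg1
    subst hDg
    rw [csec_congr hg2]
    exact mul_le_of_le_one_right
      (wHat_nonneg m' (fun x => (hm' x).1) _) (by linarith)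
  · -- main case
    set s : ℕ := sbar ε ϵ k0 with hsdef
    have hcase : 4 < (k0 : ℝ) * ϵ ^ 2 := by
      by_contra hc
      rw [hsdef, sbar, if_neg hc] at hspos
      exact Nat.lt_irrefl 0 hspos
    have hsbar : s = sSup {l : ℕ | 4 < (k0 : ℝ) / ((l : ℝ) + 1) * ϵ ^ 2 * ε ^ l} := by
      rw [hsdef, sbar, if_pos hcase]
    have hbdd : BddAbove {l : ℕ | 4 < (k0 : ℝ) / ((l : ℝ) + 1) * ϵ ^ 2 * ε ^ l} := by
      refine ⟨k0, fun l hl => ?_⟩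
      simp only [Set.mem_setOf_eq] at hl
      have hl1 : (0:ℝ) < (l : ℝ) + 1 := by positivity
      have e : (k0 : ℝ) / ((l : ℝ) + 1) * ϵ ^ 2 * ε ^ l * ((l : ℝ) + 1)
          = (k0 : ℝ) * (ϵ ^ 2 * ε ^ l) := by field_simp
      have h4 : 4 * ((l : ℝ) + 1) < (k0 : ℝ) * (ϵ ^ 2 * ε ^ l) := by
        have := mul_lt_mul_of_pos_right hl hl1
        rw [e] at this
        linarith
      have h2 : ϵ ^ 2 ≤ 1 := by nlinarith
      have h3 : ε ^ l ≤ 1 := pow_le_one₀ (le_of_lt hε0) (by linarith)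
      have h5 : (0:ℝ) ≤ ε ^ l := by positivity
      have h6 : (k0 : ℝ) * (ϵ ^ 2 * ε ^ l) ≤ (k0 : ℝ) := by nlinarith [Nat.cast_nonneg (α := ℝ) k0]
      have h7 : (l : ℝ) < (k0 : ℝ) := by linarith
      exact le_of_lt (by exact_mod_cast h7)
    have h0mem : (0:ℕ) ∈ {l : ℕ | 4 < (k0 : ℝ) / ((l : ℝ) + 1) * ϵ ^ 2 * ε ^ l} := by
      simp only [Set.mem_setOf_eq, Nat.cast_zero, zero_add, div_one, pow_zero, mul_one]
      exact hcase
    have hs_mem : 4 < (k0 : ℝ) / ((s : ℝ) + 1) * ϵ ^ 2 * ε ^ s := by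
      have := Nat.sSup_mem ⟨0, h0mem⟩ hbdd
      rw [← hsbar] at this
      exact this
    have hsR : (0:ℝ) < (s : ℝ) := by exact_mod_cast hspos
    have hs1R : (0:ℝ) < (s : ℝ) + 1 := by positivity
    -- k0 ≥ s (s+1)
    have hq1 : 4 * ((s : ℝ) + 1) < (k0 : ℝ) * (ϵ ^ 2 * ε ^ s) := by
      have e : (k0 : ℝ) / ((s : ℝ) + 1) * ϵ ^ 2 * ε ^ s * ((s : ℝ) + 1)
          = (k0 : ℝ) * (ϵ ^ 2 * ε ^ s) := by field_simp
      have := mul_lt_mul_of_pos_right hs_mem hs1R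
      rw [e] at this
      linarith
    have hq2 : ϵ ^ 2 * ε ^ s ≤ (1/4) * (1/2) ^ s := by
      have h2 : ϵ ^ 2 ≤ 1/4 := by nlinarith
      have h3 : ε ^ s ≤ (1/2) ^ s := pow_le_pow_left₀ (le_of_lt hε0) (le_of_lt hε2) s
      have h4 : (0:ℝ) ≤ ε ^ s := by positivity
      have h5 : (0:ℝ) ≤ ϵ ^ 2 := by positivity
      nlinarith
    have hq3 : (s : ℝ) ≤ 2 ^ s := by exact_mod_cast (Nat.lt_two_pow_self (n := s)).le
    have hq4 : ((1:ℝ)/2) ^ s * 2 ^ s = 1 := by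
      rw [← mul_pow]; norm_num
    have h5 : 4 * ((s : ℝ) + 1) < (k0 : ℝ) * ((1/4) * (1/2) ^ s) :=
      lt_of_lt_of_le hq1 (mul_le_mul_of_nonneg_left hq2 (Nat.cast_nonneg k0))
    have h6 : 16 * ((s : ℝ) + 1) < (k0 : ℝ) * (1/2) ^ s := by nlinarith
    have h7 : 16 * ((s : ℝ) + 1) * 2 ^ s < (k0 : ℝ) := by
      have h8 := mul_lt_mul_of_pos_right h6 (by positivity : (0:ℝ) < (2:ℝ) ^ s)
      have h8' : (k0 : ℝ) * (1/2) ^ s * 2 ^ s = (k0 : ℝ) := by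
        rw [mul_assoc, hq4, mul_one]
      rw [h8'] at h8
      linarith
    have hk0s : (s : ℝ) * ((s : ℝ) + 1) ≤ (k0 : ℝ) := by nlinarith
    have hsk0 : s ≤ k0 := by
      have h9 : (s : ℝ) ≤ (k0 : ℝ) := by nlinarith
      exact_mod_cast h9
    -- the number of improvement steps
    set T : ℕ := (k0 - s) / s + 1 with hTdef
    have hBT : (k0 - s : ℕ) < T * s := by
      have h1 := Nat.div_add_mod (k0 - s) s
      have h2 := Nat.mod_lt (k0 - s) hspos
      calc (k0 - s : ℕ) = s * ((k0-s)/s) + (k0-s) % s := h1.symm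
        _ < s * ((k0-s)/s) + s := by omega
        _ = ((k0-s)/s + 1) * s := by ring
    have hcast : ((k0 - s : ℕ) : ℝ) = (k0 : ℝ) - (s : ℝ) := by
      rw [Nat.cast_sub hsk0]
    have hTreal : (k0 : ℝ) / ((s : ℝ) + 1) ≤ (T : ℝ) := by
      have h1 : (k0 : ℝ) - (s : ℝ) < (T : ℝ) * (s : ℝ) := by
        rw [← hcast]; exact_mod_cast hBT
      rw [div_le_iff₀ hs1R]
      nlinarith
    by_contra hcon
    push_neg at hcon
    -- iteratively improve
    have key : ∀ t : ℕ, t ≤ T → ∃ (D : Set (ι → ZMod 2)) (v : (ι → ZMod 2) → Bool),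
        Df ⊆ D ∧ (∀ x ∈ Df, v x = vf x) ∧ (D \ Df).ncard ≤ t * s ∧
        wHat m' (csec C Df vf) * (1 + ϵ * ε ^ s / 4) ^ t ≤ wHat m' (csec C D v) := by
      intro t
      induction t with
      | zero =>
        intro _
        exact ⟨Df, vf, subset_rfl, fun _ _ => rfl, by simp, by simp⟩
      | succ t ih =>
        intro hT
        obtain ⟨D, v, h1, h2, h3, h4⟩ := ih (Nat.le_of_succ_le hT)
        have hts : t * s ≤ k0 - s := by
          have ht' : t ≤ (k0 - s) / s := by omega
          calc t * s ≤ ((k0 - s) / s) * s := Nat.mul_le_mul_right s ht'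
            _ ≤ k0 - s := Nat.div_mul_le_self _ _
        obtain ⟨Dg, vg, hg1, hg2, hg3, hg4⟩ := hcon D v h1 h2 (le_trans h3 hts)
        have hDm : D.ncard ≤ m := by
          have he : D = Df ∪ (D \ Df) := (Set.union_diff_cancel h1).symm
          calc D.ncard = (Df ∪ (D \ Df)).ncard := by rw [← he]
            _ ≤ Df.ncard + (D \ Df).ncard := Set.ncard_union_le _ _
            _ ≤ kup + (k0 - s) := add_le_add hDf (le_trans h3 hts)
            _ ≤ m := by omega
        have hDgm : Dg.ncard ≤ m := by
          have he : Dg = D ∪ (Dg \ D) := (Set.union_diff_cancel hg1).symm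
          calc Dg.ncard = (D ∪ (Dg \ D)).ncard := by rw [← he]
            _ ≤ D.ncard + (Dg \ D).ncard := Set.ncard_union_le _ _
            _ ≤ (kup + (k0 - s)) + s := by
                refine add_le_add ?_ hg3
                have he2 : D = Df ∪ (D \ Df) := (Set.union_diff_cancel h1).symm
                calc D.ncard = (Df ∪ (D \ Df)).ncard := by rw [← he2]
                  _ ≤ Df.ncard + (D \ Df).ncard := Set.ncard_union_le _ _
                  _ ≤ kup + (k0 - s) := add_le_add hDf (le_trans h3 hts)
            _ ≤ m := by omega
        have hwf0 : 0 < wHat m' (csec C Df vf) := lt_of_lt_of_le hϵ0 hbig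
        have hpow1 : (1:ℝ) ≤ (1 + ϵ * ε ^ s / 4) ^ t :=
          one_le_pow₀ (le_add_of_nonneg_right (by positivity))
        have hwpos : 0 < wHat m' (csec C D v) := by nlinarith
        have hwf_le : wHat m' (csec C Df vf) ≤ wHat m' (csec C D v) := by nlinarith
        have hbad' : wHat m' (csec C Dg vg) < (1 - ϵ) * wHat m' (csec C D v) := by
          calc wHat m' (csec C Dg vg) < wHat m' (csec C Df vf) * (1 - ϵ) := hg4
            _ = (1 - ϵ) * wHat m' (csec C Df vf) := mul_comm _ _
            _ ≤ (1 - ϵ) * wHat m' (csec C D v) :=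
                mul_le_mul_of_nonneg_left hwf_le (by linarith)
        obtain ⟨v', hv'1, hv'2⟩ := main_step m ε ϵ δ hε0 hε2 hϵ0 hϵε hδ0 hδ C hC m' hm'
          s D Dg v vg hDm hDgm hg1 hg2 hg3 hwpos hbad'
        refine ⟨Dg, v', h1.trans hg1, ?_, ?_, ?_⟩
        · intro x hx
          have hxD : x ∈ D := h1 hx
          rw [hv'1 x (fun hc => hc.2 hxD), h2 x hx]
        · have hsubset : Dg \ Df ⊆ (D \ Df) ∪ (Dg \ D) := by
            intro x hx
            by_cases hxD : x ∈ D
            · exact Or.inl ⟨hxD, hx.2⟩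
            · exact Or.inr ⟨hx.1, hxD⟩
          calc (Dg \ Df).ncard ≤ ((D \ Df) ∪ (Dg \ D)).ncard :=
              Set.ncard_le_ncard hsubset (Set.toFinite _)
            _ ≤ (D \ Df).ncard + (Dg \ D).ncard := Set.ncard_union_le _ _
            _ ≤ t * s + s := add_le_add h3 hg3
            _ = (t + 1) * s := by ring
        · calc wHat m' (csec C Df vf) * (1 + ϵ * ε ^ s / 4) ^ (t + 1)
              = (wHat m' (csec C Df vf) * (1 + ϵ * ε ^ s / 4) ^ t) * (1 + ϵ * ε ^ s / 4) := by
                ring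
            _ ≤ wHat m' (csec C D v) * (1 + ϵ * ε ^ s / 4) :=
                mul_le_mul_of_nonneg_right h4 (by positivity)
            _ = (1 + ϵ * ε ^ s / 4) * wHat m' (csec C D v) := mul_comm _ _
            _ ≤ wHat m' (csec C Dg v') := le_of_lt hv'2
    -- derive the contradiction
    obtain ⟨D, v, -, -, -, h4⟩ := key T le_rfl
    have h5 : wHat m' (csec C D v) ≤ 1 := wHat_le_one m' hm' _
    have h6 : 1 + (T : ℝ) * (ϵ * ε ^ s / 4) ≤ (1 + ϵ * ε ^ s / 4) ^ T := by
      have hpos : (0:ℝ) < ϵ * ε ^ s / 4 := by positivity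
      exact one_add_mul_le_pow (by linarith) T
    have hwf0 : 0 < wHat m' (csec C Df vf) := lt_of_lt_of_le hϵ0 hbig
    have h7 : ϵ * (1 + (T : ℝ) * (ϵ * ε ^ s / 4)) ≤
        wHat m' (csec C Df vf) * (1 + ϵ * ε ^ s / 4) ^ T :=
      mul_le_mul hbig h6 (by positivity) (le_of_lt hwf0)
    have h8 : ϵ * (1 + (T : ℝ) * (ϵ * ε ^ s / 4)) ≤ 1 := le_trans h7 (le_trans h4 h5)
    -- but T * ϵ² ε^s > 4
    have h9 : 4 < (T : ℝ) * (ϵ ^ 2 * ε ^ s) := by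
      have h10 : (k0 : ℝ) / ((s : ℝ) + 1) * (ϵ ^ 2 * ε ^ s) ≤ (T : ℝ) * (ϵ ^ 2 * ε ^ s) :=
        mul_le_mul_of_nonneg_right hTreal (by positivity)
      nlinarith
    nlinarith
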